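/- Assume v_{ij} = 1 for all buyers i and items j, and B_i = d_i > 0 for all buyers i. Suppose there exists an allocation giving every buyer strictly positive utility, and let x maximize Σ_i d_i log(Σ_j x_{ij} − d_i) over all allocations x ∈ ℝ_{≥0}^{n×m} with Σ_i x_{ij} ≤ 1 for each j and Σ_j x_{ij} − d_i > 0 for each i. Then the ratio (Σ_j x_{ij}) / d_i is equal for all buyers i; that is, there is a constant c > 1 with Σ_j x_{ij} = c · d_i for every i. -/

import Mathlib

open Finset

lemma eg_key (a b p q t : ℝ) (ha : 0 < a) (hb : 0 < b) (hp : 0 < p) (hq : 0 < q)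
    (ht : 0 < t) (htq : t < q) (hmain : b * (p + t) < a * (q - t)) :
    a * Real.log p + b * Real.log q < a * Real.log (p + t) + b * Real.log (q - t) := by
  have hpt : 0 < p + t := by linarith
  have hqt : 0 < q - t := by linarith
  have h1 : t / (p + t) ≤ Real.log (p + t) - Real.log p := by
    have h := Real.log_le_sub_one_of_pos (show 0 < p / (p + t) by positivity)
    rw [Real.log_div hp.ne' hpt.ne'] at h
    have e : p / (p + t) - 1 = -(t / (p + t)) := by field_simp; ring
    rw [e] at h; linarith
  have h2 : Real.log q - Real.log (q - t) ≤ t / (q - t) := by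
    have h := Real.log_le_sub_one_of_pos (show 0 < q / (q - t) by positivity)
    rw [Real.log_div hq.ne' hqt.ne'] at h
    have e : q / (q - t) - 1 = t / (q - t) := by field_simp; ring
    rw [e] at h; linarith
  have h3 : b * t / (q - t) < a * t / (p + t) := by
    rw [div_lt_div_iff₀ hqt hpt]; nlinarith
  have h1' := mul_le_mul_of_nonneg_left h1 ha.le
  have h2' := mul_le_mul_of_nonneg_left h2 hb.le
  rw [mul_div_assoc, mul_div_assoc] at h3
  linarith [h1', h2', h3]

/-- With all valuations equal to one and budgets equal to demands, any maximizer
of the (budget-weighted) Eisenberg–Gale objective with demands allocates to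
every buyer the same constant multiple of their demand. -/
theorem eg_budget_eq_demand_proportional_allocation
    (n m : ℕ) (d : Fin n → ℝ) (hd : ∀ i, 0 < d i)
    (x : Fin n → Fin m → ℝ)
    (hexist : ∃ y : Fin n → Fin m → ℝ, (∀ i j, 0 ≤ y i j) ∧
      (∀ j, ∑ i, y i j ≤ 1) ∧ (∀ i, 0 < (∑ j, y i j) - d i))
    (hx : ∀ i j, 0 ≤ x i j) (halloc : ∀ j, ∑ i, x i j ≤ 1)
    (hpos : ∀ i, 0 < (∑ j, x i j) - d i)
    (hopt : ∀ y : Fin n → Fin m → ℝ, (∀ i j, 0 ≤ y i j) → (∀ j, ∑ i, y i j ≤ 1) →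
      (∀ i, 0 < (∑ j, y i j) - d i) →
      ∑ i, d i * Real.log ((∑ j, y i j) - d i) ≤
        ∑ i, d i * Real.log ((∑ j, x i j) - d i)) :
    ∃ c : ℝ, 1 < c ∧ ∀ i, (∑ j, x i j) = c * d i := by
  rcases Nat.eq_zero_or_pos n with hn | hn
  · subst hn
    exact ⟨2, by norm_num, fun i => i.elim0⟩
  -- main claim : all ratios are equal
  suffices hall : ∀ i k : Fin n, ((∑ j, x i j) - d i) / d i ≤ ((∑ j, x k j) - d k) / d k by
    set i0 : Fin n := ⟨0, hn⟩
    refine ⟨((∑ j, x i0 j) - d i0) / d i0 + 1, ?_, ?_⟩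
    · have : 0 < ((∑ j, x i0 j) - d i0) / d i0 := div_pos (hpos i0) (hd i0)
      linarith
    · intro i
      have h1 := hall i i0
      have h2 := hall i0 i
      have heq : ((∑ j, x i j) - d i) / d i = ((∑ j, x i0 j) - d i0) / d i0 := le_antisymm h1 h2
      have h3 : (∑ j, x i j) - d i = ((∑ j, x i0 j) - d i0) / d i0 * d i := by
        rw [← heq, div_mul_cancel₀ _ (hd i).ne']
      linarith [h3]
  intro k i
  by_contra hcon
  push_neg at hcon
  -- hcon : r i < r k  with k the giver... here r k < r i? careful:
  -- goal was r k ≤ r i (first arg k, second i); negation: r i < r k.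
  -- receiver: i (small ratio), giver: k (big ratio)
  set Si := ∑ j, x i j with hSi
  set Sk := ∑ j, x k j with hSk
  have hik : i ≠ k := by rintro rfl; exact lt_irrefl _ hcon
  have hp : 0 < Si - d i := hpos i
  have hq : 0 < Sk - d k := hpos k
  -- aq > bp : d i * (Sk - d k) > d k * (Si - d i)
  have hcross : d k * (Si - d i) < d i * (Sk - d k) := by
    rw [div_lt_div_iff₀ (hd i) (hd k)] at hcon
    linarith
  -- some item with x k j0 > 0
  have hSkpos : 0 < Sk := lt_trans (hd k) (by linarith)
  have hj0 : ∃ j0, 0 < x k j0 := by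
    by_contra h
    push_neg at h
    have : Sk ≤ 0 := Finset.sum_nonpos fun j _ => h j
    linarith
  obtain ⟨j0, hj0⟩ := hj0
  set a := d i with ha'
  set b := d k with hb'
  set p := Si - d i with hp'
  set q := Sk - d k with hq'
  set t := min (x k j0) (min (q / 2) ((a * q - b * p) / (2 * (a + b)))) with ht'
  have habpos : 0 < a + b := by have := hd i; have := hd k; linarith
  have hnum : 0 < a * q - b * p := by linarith
  have ht : 0 < t := by
    refine lt_min hj0 (lt_min (by linarith) (div_pos hnum (by linarith)))
  have htx : t ≤ x k j0 := min_le_left _ _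
  have htq2 : t ≤ q / 2 := le_trans (min_le_right _ _) (min_le_left _ _)
  have htq : t < q := by linarith
  have ht3 : t ≤ (a * q - b * p) / (2 * (a + b)) :=
    le_trans (min_le_right _ _) (min_le_right _ _)
  have hmain : b * (p + t) < a * (q - t) := by
    have h := (le_div_iff₀ (by linarith : (0:ℝ) < 2 * (a + b))).mp ht3
    nlinarith
  -- the transfer allocation
  set y : Fin n → Fin m → ℝ := fun a' b' =>
    x a' b' + (if a' = i ∧ b' = j0 then t else 0) - (if a' = k ∧ b' = j0 then t else 0)
    with hy
  have hrow : ∀ a', ∑ b', y a' b' =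
      (∑ b', x a' b') + (if a' = i then t else 0) - (if a' = k then t else 0) := by
    intro a'
    simp only [hy]
    rw [Finset.sum_sub_distrib, Finset.sum_add_distrib]
    congr 1
    · congr 1
      by_cases h : a' = i <;> simp [h]
    · by_cases h : a' = k <;> simp [h]
  have hcol : ∀ b', ∑ a', y a' b' = ∑ a', x a' b' := by
    intro b'
    simp only [hy]
    rw [Finset.sum_sub_distrib, Finset.sum_add_distrib]
    by_cases h : b' = j0 <;> simp [h]
  have hynn : ∀ a' b', 0 ≤ y a' b' := by
    intro a' b'
    simp only [hy]
    rcases eq_or_ne a' k with rfl | hak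
    · have hki : a' ≠ i := fun h => hik h.symm
      rcases eq_or_ne b' j0 with rfl | hbj
      · simp only [hki, false_and, if_false, and_self, if_true]
        have := hx a' b'; linarith [htx]
      · simp only [hbj, and_false, if_false]
        have := hx a' b'; linarith
    · rcases eq_or_ne a' i with rfl | hai
      · rcases eq_or_ne b' j0 with rfl | hbj
        · simp only [hak, false_and, if_false, and_self, if_true]
          have := hx a' b'; linarith [ht]
        · simp only [hbj, and_false, if_false]
          have := hx a' b'; linarith
      · simp only [hak, hai, false_and, if_false]
        have := hx a' b'; linarith
  have hycol : ∀ j, ∑ i', y i' j ≤ 1 := fun j => by rw [hcol]; exact halloc j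
  have e_i : ∑ b', y i b' = Si + t := by
    rw [hrow]; simp [hik]; exact hSi.symm
  have e_k : ∑ b', y k b' = Sk - t := by
    rw [hrow]; simp [hik.symm]; exact hSk.symm
  have e_other : ∀ a', a' ≠ i → a' ≠ k → ∑ b', y a' b' = ∑ b', x a' b' := by
    intro a' h1 h2; rw [hrow]; simp [h1, h2]
  have hypos : ∀ i', 0 < (∑ j, y i' j) - d i' := by
    intro i'
    by_cases h1 : i' = i
    · subst h1; rw [e_i]; linarith
    · by_cases h2 : i' = k
      · subst h2; rw [e_k]; linarith
      · rw [e_other i' h1 h2]; exact hpos i'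
  -- strict improvement
  have hlt : ∑ i', d i' * Real.log ((∑ j, x i' j) - d i')
      < ∑ i', d i' * Real.log ((∑ j, y i' j) - d i') := by
    rw [← sub_pos, ← Finset.sum_sub_distrib]
    have hsplit : ∑ i', (d i' * Real.log ((∑ j, y i' j) - d i')
        - d i' * Real.log ((∑ j, x i' j) - d i'))
        = (d i * Real.log ((∑ j, y i j) - d i) - d i * Real.log ((∑ j, x i j) - d i))
        + (d k * Real.log ((∑ j, y k j) - d k) - d k * Real.log ((∑ j, x k j) - d k)) := by
      have hsub : ∑ i', (d i' * Real.log ((∑ j, y i' j) - d i')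
          - d i' * Real.log ((∑ j, x i' j) - d i'))
          = ∑ a' ∈ ({i, k} : Finset (Fin n)), (d a' * Real.log ((∑ j, y a' j) - d a')
          - d a' * Real.log ((∑ j, x a' j) - d a')) := by
        refine (Finset.sum_subset (Finset.subset_univ _) ?_).symm
        intro a' _ ha'
        simp only [Finset.mem_insert, Finset.mem_singleton, not_or] at ha'
        rw [e_other a' ha'.1 ha'.2]
        ring
      rw [hsub, Finset.sum_pair hik]
    rw [hsplit, e_i, e_k]
    have e1 : Si + t - d i = p + t := by rw [hp']; ring
    have e2 : Sk - t - d k = q - t := by rw [hq']; ring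
    rw [e1, e2]
    have hkey := eg_key a b p q t (hd i) (hd k) hp hq ht htq hmain
    rw [ha', hb'] at hkey
    have e3 : (∑ j, x i j) - d i = p := rfl
    have e4 : (∑ j, x k j) - d k = q := rfl
    rw [e3, e4]
    linarith
  exact absurd (hopt y hynn hycol hypos) (not_le.mpr hlt)
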